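/- If T is a tree of order n, then C(T) = n if and only if T is a path on at most 4 vertices. -/

import Mathlib

open SimpleGraph

attribute [local instance] Classical.propDecidable

def Dominates {V : Type*} (G : SimpleGraph V) (S : Set V) : Prop :=
  ∀ v, v ∉ S → ∃ u ∈ S, G.Adj u v

def Coalition {V : Type*} (G : SimpleGraph V) (A B : Set V) : Prop :=
  Disjoint A B ∧ ¬ Dominates G A ∧ ¬ Dominates G B ∧ Dominates G (A ∪ B)

def IsCoalitionPartition {V : Type*} (G : SimpleGraph V) (P : Finset (Set V)) : Prop :=
  (∀ A ∈ P, A.Nonempty) ∧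
  (∀ A ∈ P, ∀ B ∈ P, A ≠ B → Disjoint A B) ∧
  (∀ v : V, ∃ A ∈ P, v ∈ A) ∧
  (∀ A ∈ P, (Dominates G A ∧ ∃ v, A = {v}) ∨
    (¬ Dominates G A ∧ ∃ B ∈ P, B ≠ A ∧ Coalition G A B))

noncomputable def coalitionNumber {V : Type*} (G : SimpleGraph V) : ℕ :=
  sSup {n | ∃ P : Finset (Set V), IsCoalitionPartition G P ∧ P.card = n}

def coalitionGraph {V : Type*} (G : SimpleGraph V) (P : Finset (Set V)) :
    SimpleGraph {A : Set V // A ∈ P} where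
  Adj A B := Coalition G A.1 B.1
  symm := by
    constructor
    rintro A B ⟨d, na, nb, u⟩
    exact ⟨d.symm, nb, na, by rwa [Set.union_comm]⟩
  loopless := by
    constructor
    rintro ⟨A, hA⟩ ⟨d, na, nb, u⟩
    rw [Set.union_self] at u
    exact na u

def Good {V : Type*} (G : SimpleGraph V) : Prop :=
  ∀ v : V, Dominates G {v} ∨ ∃ u : V, u ≠ v ∧ Coalition G {v} {u}

section CN
variable {V : Type*} [Fintype V] (G : SimpleGraph V)

lemma cp_card_le (P : Finset (Set V)) (hP : IsCoalitionPartition G P) :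
    P.card ≤ Fintype.card V := by
  classical
  rcases P.eq_empty_or_nonempty with rfl | ⟨A₀, hA₀⟩
  · simp
  · have hne : Nonempty V := ⟨(hP.1 A₀ hA₀).some⟩
    refine Finset.card_le_card_of_injOn
      (fun A => if h : A.Nonempty then h.some else Classical.ofNonempty)
      (fun _ _ => Finset.mem_univ _) ?_
    intro A hA B hB hAB
    by_contra hne'
    have hAn := hP.1 A hA
    have hBn := hP.1 B hB
    simp only [dif_pos hAn, dif_pos hBn] at hAB
    exact (hP.2.1 A hA B hB hne').ne_of_mem hAn.some_mem hBn.some_mem hAB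

lemma singleton_partition_card :
    (Finset.univ.image (fun v => ({v} : Set V))).card = Fintype.card V := by
  classical
  rw [Finset.card_image_of_injective _ (fun a b h => by
    simpa [Set.singleton_eq_singleton_iff] using h)]
  simp

lemma good_isCP (hG : Good G) :
    IsCoalitionPartition G (Finset.univ.image (fun v => ({v} : Set V))) := by
  classical
  refine ⟨?_, ?_, ?_, ?_⟩
  · rintro A hA
    simp only [Finset.mem_image] at hA
    obtain ⟨v, -, rfl⟩ := hA
    exact ⟨v, rfl⟩
  · rintro A hA B hB hne
    simp only [Finset.mem_image] at hA hB
    obtain ⟨v, -, rfl⟩ := hA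
    obtain ⟨u, -, rfl⟩ := hB
    simp only [Set.disjoint_singleton_left, Set.mem_singleton_iff]
    rintro rfl; exact hne rfl
  · intro v
    exact ⟨{v}, Finset.mem_image_of_mem _ (Finset.mem_univ v), rfl⟩
  · rintro A hA
    simp only [Finset.mem_image] at hA
    obtain ⟨v, -, rfl⟩ := hA
    rcases hG v with h | ⟨u, hu, hc⟩
    · exact Or.inl ⟨h, v, rfl⟩
    · refine Or.inr ⟨hc.2.1, {u}, Finset.mem_image_of_mem _ (Finset.mem_univ u), ?_, hc⟩
      simp [Set.singleton_eq_singleton_iff]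
      rintro rfl; exact hu rfl

lemma cn_eq_iff_good [Nonempty V] :
    coalitionNumber G = Fintype.card V ↔ Good G := by
  classical
  set S := {n | ∃ P : Finset (Set V), IsCoalitionPartition G P ∧ P.card = n} with hS
  have hbdd : ∀ k ∈ S, k ≤ Fintype.card V := by
    rintro k ⟨P, hP, rfl⟩; exact cp_card_le G P hP
  constructor
  · intro h
    -- S is nonempty
    have hSne : S.Nonempty := by
      by_contra hc
      rw [Set.not_nonempty_iff_eq_empty] at hc
      rw [coalitionNumber, ← hS, hc, csSup_empty] at h
      have h0 : (0 : ℕ) = Fintype.card V := by simpa using h.symm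
      have := Fintype.card_pos (α := V)
      omega
    have hmem : Fintype.card V ∈ S := by
      rw [coalitionNumber, ← hS] at h
      rw [← h]
      exact Nat.sSup_mem hSne ⟨Fintype.card V, hbdd⟩
    obtain ⟨P, hP, hcard⟩ := hmem
    -- every part is a singleton
    have hsing : ∀ A ∈ P, ∃ a, A = {a} := by
      have hcover : Finset.univ = P.biUnion (fun A => (Set.toFinite A).toFinset) := by
        ext v
        simp only [Finset.mem_univ, true_iff, Finset.mem_biUnion, Set.Finite.mem_toFinset]
        exact hP.2.2.1 v
      have hdisj : ∀ A ∈ P, ∀ B ∈ P, A ≠ B →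
          Disjoint ((Set.toFinite A).toFinset) ((Set.toFinite B).toFinset) := by
        intro A hA B hB hne
        rw [Finset.disjoint_left]
        intro a ha hb
        rw [Set.Finite.mem_toFinset] at ha hb
        exact (hP.2.1 A hA B hB hne).ne_of_mem ha hb rfl
      have hsum : ∑ A ∈ P, ((Set.toFinite A).toFinset).card = Fintype.card V := by
        rw [← Finset.card_biUnion hdisj, ← hcover]; rfl
      have hone : ∀ A ∈ P, ((Set.toFinite A).toFinset).card = 1 := by
        by_contra hc
        push_neg at hc
        obtain ⟨A₀, hA₀, hA₀ne⟩ := hc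
        have h1 : ∀ A ∈ P, 1 ≤ ((Set.toFinite A).toFinset).card := by
          intro A hA
          have := hP.1 A hA
          exact Finset.card_pos.2 ⟨this.some, (Set.Finite.mem_toFinset _).2 this.some_mem⟩
        have : ∑ A ∈ P, (1 : ℕ) < ∑ A ∈ P, ((Set.toFinite A).toFinset).card := by
          refine Finset.sum_lt_sum h1 ⟨A₀, hA₀, ?_⟩
          have := h1 A₀ hA₀
          omega
        simp only [Finset.sum_const, smul_eq_mul, mul_one] at this
        omega
      intro A hA
      obtain ⟨a, ha⟩ := Finset.card_eq_one.1 (hone A hA)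
      refine ⟨a, ?_⟩
      ext x
      rw [Set.mem_singleton_iff, ← Set.Finite.mem_toFinset (Set.toFinite A), ha,
        Finset.mem_singleton]
    intro v
    obtain ⟨A, hA, hvA⟩ := hP.2.2.1 v
    obtain ⟨a, rfl⟩ := hsing A hA
    rw [Set.mem_singleton_iff] at hvA
    subst hvA
    rcases hP.2.2.2 _ hA with ⟨hdom, -⟩ | ⟨hnd, B, hB, hBne, hc⟩
    · exact Or.inl hdom
    · obtain ⟨u, rfl⟩ := hsing B hB
      refine Or.inr ⟨u, ?_, hc⟩
      rintro rfl; exact hBne rfl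
  · intro hG
    have hmem : Fintype.card V ∈ S :=
      ⟨_, good_isCP G hG, singleton_partition_card⟩
    refine le_antisymm (csSup_le ⟨_, hmem⟩ hbdd) (le_csSup ⟨Fintype.card V, hbdd⟩ hmem)

end CN

section Tree
variable {V : Type*} {T : SimpleGraph V}

lemma tree_path_length (hT : T.IsTree) {a b : V} {p : T.Walk a b} (hp : p.IsPath) :
    p.length = T.dist a b := by
  classical
  obtain ⟨w, hw⟩ := hT.isConnected.exists_walk_length_eq_dist a b
  have huniq := hT.existsUnique_path a b
  have h1 : p = w.bypass := huniq.unique hp w.bypass_isPath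
  have h3 : p.length ≤ w.length := h1 ▸ w.length_bypass_le
  have h2 := SimpleGraph.dist_le p
  omega

lemma adj_dist_eq_one (hT : T.IsTree) {a b : V} (h : T.Adj a b) : T.dist a b = 1 := by
  have hp : (Walk.cons h Walk.nil).IsPath := by simp [Walk.isPath_def, h.ne]
  simpa using (tree_path_length hT hp).symm

lemma chain2_dist (hT : T.IsTree) {a b c : V} (h1 : T.Adj a b) (h2 : T.Adj b c)
    (hac : a ≠ c) : T.dist a c = 2 := by
  have hp : (Walk.cons h1 (Walk.cons h2 Walk.nil)).IsPath := by
    simp [Walk.isPath_def, h1.ne, h2.ne, hac]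
  simpa using (tree_path_length hT hp).symm

lemma chain3_dist (hT : T.IsTree) {a b c d : V} (h1 : T.Adj a b) (h2 : T.Adj b c)
    (h3 : T.Adj c d) (hac : a ≠ c) (had : a ≠ d) (hbd : b ≠ d) : T.dist a d = 3 := by
  have hp : (Walk.cons h1 (Walk.cons h2 (Walk.cons h3 Walk.nil))).IsPath := by
    simp [Walk.isPath_def, h1.ne, h2.ne, h3.ne, hac, had, hbd]
  simpa using (tree_path_length hT hp).symm

lemma chain4_dist (hT : T.IsTree) {a b c d e : V} (h1 : T.Adj a b) (h2 : T.Adj b c)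
    (h3 : T.Adj c d) (h4 : T.Adj d e) (hac : a ≠ c) (had : a ≠ d) (hae : a ≠ e)
    (hbd : b ≠ d) (hbe : b ≠ e) (hce : c ≠ e) : T.dist a e = 4 := by
  have hp : (Walk.cons h1 (Walk.cons h2 (Walk.cons h3 (Walk.cons h4 Walk.nil)))).IsPath := by
    simp [Walk.isPath_def, h1.ne, h2.ne, h3.ne, h4.ne, hac, had, hae, hbd, hbe, hce]
  simpa using (tree_path_length hT hp).symm

lemma no_triangle (hT : T.IsTree) {a b c : V} (h1 : T.Adj a b) (h2 : T.Adj b c)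
    (h3 : T.Adj a c) : False := by
  have := chain2_dist hT h1 h2 h3.ne
  have := adj_dist_eq_one hT h3
  omega

lemma walk_len1 {a b : V} (p : T.Walk a b) (h : p.length = 1) : T.Adj a b := by
  cases p with
  | nil => simp at h
  | cons h1 q =>
    cases q with
    | nil => exact h1
    | cons h2 r => simp [Walk.length_cons] at h

lemma walk_len2 {a b : V} (p : T.Walk a b) (h : p.length = 2) :
    ∃ c, T.Adj a c ∧ T.Adj c b := by
  cases p with
  | nil => simp at h
  | cons h1 q =>
    cases q with
    | nil => simp at h
    | cons h2 r =>
      cases r with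
      | nil => exact ⟨_, h1, h2⟩
      | cons h3 s => simp [Walk.length_cons] at h

lemma dist_one_adj (hT : T.IsTree) {a b : V} (h : T.dist a b = 1) : T.Adj a b := by
  obtain ⟨w, hw⟩ := hT.isConnected.exists_walk_length_eq_dist a b
  exact walk_len1 w (hw.trans h)

lemma dist_two_mid (hT : T.IsTree) {a b : V} (h : T.dist a b = 2) :
    ∃ c, T.Adj a c ∧ T.Adj c b := by
  obtain ⟨w, hw⟩ := hT.isConnected.exists_walk_length_eq_dist a b
  exact walk_len2 w (hw.trans h)

lemma exists_geodesic_path (hT : T.IsTree) (a b : V) :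
    ∃ p : T.Walk a b, p.IsPath ∧ p.length = T.dist a b := by
  classical
  obtain ⟨w, hw⟩ := hT.isConnected.exists_walk_length_eq_dist a b
  exact ⟨w.bypass, w.bypass_isPath, tree_path_length hT w.bypass_isPath⟩

lemma path3_struct {a b : V} (p : T.Walk a b) (hlen : p.length = 3) :
    ∃ x y, T.Adj a x ∧ T.Adj x y ∧ T.Adj y b ∧ p.support = [a, x, y, b] := by
  cases p with
  | nil => simp at hlen
  | cons h1 q =>
    cases q with
    | nil => simp at hlen
    | cons h2 r =>
      cases r with
      | nil => simp at hlen
      | cons h3 s =>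
        cases s with
        | nil => exact ⟨_, _, h1, h2, h3, by simp⟩
        | cons h4 t => simp [Walk.length_cons] at hlen

end Tree

section NotGood
variable {V : Type*} {T : SimpleGraph V}

lemma not_good_of_triple {v p q : V} (hvp : ¬T.Adj v p) (hvq : ¬T.Adj v q)
    (hpq : ¬T.Adj p q) (hnc : ∀ u, ¬(T.Adj u p ∧ T.Adj u q))
    (hvp' : v ≠ p) (hvq' : v ≠ q) (hpq' : p ≠ q) : ¬ Good T := by
  intro hG
  rcases hG v with hdom | ⟨u, hu, _, _, _, dU⟩
  · obtain ⟨w, hw, hadj⟩ := hdom p (by simp [Ne.symm hvp'])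
    rw [Set.mem_singleton_iff] at hw; subst hw
    exact hvp hadj
  · by_cases hup : u = p
    · subst hup
      obtain ⟨w, hw, hadj⟩ := dU q (by simp [Ne.symm hvq', Ne.symm hpq'])
      rcases hw with hw | hw <;> rw [Set.mem_singleton_iff] at hw <;> subst hw
      · exact hvq hadj
      · exact hpq hadj
    · by_cases huq : u = q
      · subst huq
        obtain ⟨w, hw, hadj⟩ := dU p (by simp [Ne.symm hvp', hpq'])
        rcases hw with hw | hw <;> rw [Set.mem_singleton_iff] at hw <;> subst hw
        · exact hvp hadj
        · exact hpq (T.adj_symm hadj)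
      · obtain ⟨w, hw, hadj⟩ := dU p (by simp [Ne.symm hvp', Ne.symm hup])
        have hup' : T.Adj u p := by
          rcases hw with hw | hw <;> rw [Set.mem_singleton_iff] at hw <;> subst hw
          · exact absurd hadj hvp
          · exact hadj
        obtain ⟨w, hw, hadj⟩ := dU q (by simp [Ne.symm hvq', Ne.symm huq])
        have huq' : T.Adj u q := by
          rcases hw with hw | hw <;> rw [Set.mem_singleton_iff] at hw <;> subst hw
          · exact absurd hadj hvq
          · exact hadj
        exact hnc u ⟨hup', huq'⟩

lemma not_good_of_star {c x y z : V} (hx : ∀ u, T.Adj u x → u = c)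
    (hy : ∀ u, T.Adj u y → u = c) (hz : ∀ u, T.Adj u z → u = c)
    (hdomc : Dominates T {c}) (hxc : x ≠ c) (hyc : y ≠ c) (hzc : z ≠ c)
    (hxy : x ≠ y) (hxz : x ≠ z) (hyz : y ≠ z) : ¬ Good T := by
  intro hG
  rcases hG x with hdom | ⟨u, hu, _, _, ndu, dU⟩
  · obtain ⟨w, hw, hadj⟩ := hdom y (by simp [Ne.symm hxy])
    rw [Set.mem_singleton_iff] at hw
    exact hxc (hw.symm.trans (hy w hadj))
  · have huc : u ≠ c := by rintro rfl; exact ndu hdomc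
    -- pick w ∈ {y, z} with w ≠ u
    have : ∃ w, (∀ s, T.Adj s w → s = c) ∧ w ≠ x ∧ w ≠ u := by
      by_cases huy : u = y
      · exact ⟨z, hz, Ne.symm hxz, fun h => hyz (huy ▸ h.symm ▸ rfl)⟩
      · exact ⟨y, hy, Ne.symm hxy, fun h => huy h.symm⟩
    obtain ⟨w, hw, hwx, hwu⟩ := this
    obtain ⟨s, hs, hadj⟩ := dU w (by simp [hwx, hwu])
    rcases hs with hs | hs <;> rw [Set.mem_singleton_iff] at hs
    · exact hxc (hs.symm.trans (hw s hadj))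
    · exact huc (hs.symm.trans (hw s hadj))

end NotGood

section Main
variable {V : Type*} [Fintype V] {T : SimpleGraph V}

lemma exists_diam [Nonempty V] (T : SimpleGraph V) :
    ∃ a b : V, ∀ u v : V, T.dist u v ≤ T.dist a b := by
  classical
  obtain ⟨⟨a, b⟩, -, hmax⟩ := Finset.exists_max_image (Finset.univ ×ˢ Finset.univ)
    (fun p => T.dist p.1 p.2) ⟨(Classical.arbitrary V, Classical.arbitrary V), by simp⟩
  exact ⟨a, b, fun u v => hmax (u, v) (by simp)⟩

lemma dist_pos_ne {a b : V} (h : 0 < T.dist a b) : a ≠ b := by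
  rintro rfl; simp [SimpleGraph.dist_self] at h

lemma adj_of_small_diam (hT : T.IsTree) {a b : V} (hmax : ∀ u v : V, T.dist u v ≤ T.dist a b)
    (h1 : T.dist a b ≤ 1) {u v : V} (huv : u ≠ v) : T.Adj u v :=
  dist_one_adj hT (le_antisymm ((hmax u v).trans h1) (hT.isConnected.pos_dist_of_ne huv))

lemma three_distinct (h : 3 ≤ Fintype.card V) : ∃ a b c : V, a ≠ b ∧ a ≠ c ∧ b ≠ c := by
  classical
  obtain ⟨t, -, ht⟩ := Finset.exists_subset_card_eq (show 3 ≤ Finset.univ.card by simpa using h)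
  obtain ⟨a, b, c, hab, hac, hbc, -⟩ := Finset.card_eq_three.1 ht
  exact ⟨a, b, c, hab, hac, hbc⟩

lemma universal_of_diam_two (hT : T.IsTree) {a b : V}
    (hmax : ∀ u v : V, T.dist u v ≤ T.dist a b) (h2 : T.dist a b = 2) :
    ∃ c, ∀ v, v ≠ c → T.Adj c v := by
  obtain ⟨m, ham, hmb⟩ := dist_two_mid hT h2
  have hab : a ≠ b := by
    have h0 : 0 < T.dist a b := by omega
    exact dist_pos_ne h0
  refine ⟨m, fun v hv => ?_⟩
  by_contra hnadj
  have hva : v ≠ a := by rintro rfl; exact hnadj (T.adj_symm ham)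
  have hvb : v ≠ b := by rintro rfl; exact hnadj hmb
  have hd : T.dist v m = 2 := by
    have hle : T.dist v m ≤ 2 := h2 ▸ hmax v m
    have hpos : 0 < T.dist v m := hT.isConnected.pos_dist_of_ne hv
    have hne1 : T.dist v m ≠ 1 := fun h => hnadj (T.adj_symm (dist_one_adj hT h))
    omega
  obtain ⟨w, hvw, hwm⟩ := dist_two_mid hT hd
  by_cases hwa : w = a
  · subst hwa
    have := chain3_dist hT hvw ham hmb hv hvb hab
    have := hmax v b
    omega
  · have := chain3_dist hT hvw hwm (T.adj_symm ham) hv hva hwa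
    have := hmax v a
    omega

lemma star_not_good (hT : T.IsTree) {a b : V}
    (hmax : ∀ u v : V, T.dist u v ≤ T.dist a b) (h2 : T.dist a b = 2)
    (hcard : 4 ≤ Fintype.card V) : ¬ Good T := by
  classical
  obtain ⟨c, hc⟩ := universal_of_diam_two hT hmax h2
  have hleaf : ∀ v, v ≠ c → ∀ u, T.Adj u v → u = c := by
    intro v hv u hadj
    by_contra huc
    exact no_triangle hT (hc u huc) hadj (hc v hv)
  have hdomc : Dominates T {c} := by
    intro w hw
    exact ⟨c, rfl, hc w (by simpa using hw)⟩
  have hsub : 3 ≤ (Finset.univ.erase c).card := by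
    rw [Finset.card_erase_of_mem (Finset.mem_univ c)]
    simp only [Finset.card_univ]
    omega
  obtain ⟨t, hts, ht⟩ := Finset.exists_subset_card_eq hsub
  obtain ⟨x, y, z, hxy, hxz, hyz, rfl⟩ := Finset.card_eq_three.1 ht
  have hxm : x ∈ ({x, y, z} : Finset V) := by simp
  have hym : y ∈ ({x, y, z} : Finset V) := by simp
  have hzm : z ∈ ({x, y, z} : Finset V) := by simp
  have hx := (Finset.mem_erase.1 (hts hxm)).1
  have hy := (Finset.mem_erase.1 (hts hym)).1
  have hz := (Finset.mem_erase.1 (hts hzm)).1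
  exact not_good_of_star (hleaf x hx) (hleaf y hy) (hleaf z hz) hdomc hx hy hz hxy hxz hyz

lemma path_two_step {a b : V} (p : T.Walk a b) (hp : p.IsPath) (hlen : 2 ≤ p.length) :
    ∃ (x y : V) (q : T.Walk y b), T.Adj a x ∧ T.Adj x y ∧ q.IsPath ∧
      q.length + 2 = p.length ∧ a ≠ x ∧ a ≠ y ∧ x ≠ y := by
  cases p with
  | nil => simp at hlen
  | cons h1 q1 =>
    cases q1 with
    | nil => simp at hlen
    | cons h2 q2 =>
      rw [Walk.cons_isPath_iff] at hp
      obtain ⟨hp1, hmem⟩ := hp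
      rw [Walk.cons_isPath_iff] at hp1
      refine ⟨_, _, q2, h1, h2, hp1.1, by simp [Walk.length_cons], h1.ne, ?_, h2.ne⟩
      intro hay
      apply hmem
      rw [Walk.support_cons]
      exact List.mem_cons_of_mem _ (hay ▸ q2.start_mem_support)

end Main

section GoodPath
variable {V : Type*} {T : SimpleGraph V}

lemma good_of_P1 {a : V} (hV : ∀ v : V, v = a) : Good T := by
  intro v
  left
  intro w hw
  simp only [Set.mem_singleton_iff] at hw
  exact absurd ((hV w).trans (hV v).symm) hw

lemma good_of_P2 {a b : V} (hV : ∀ v : V, v = a ∨ v = b) (hab : T.Adj a b) : Good T := by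
  intro v
  left
  intro w hw
  simp only [Set.mem_singleton_iff] at hw
  refine ⟨v, rfl, ?_⟩
  rcases hV v with rfl | rfl <;> rcases hV w with rfl | rfl <;> first
    | exact absurd rfl hw
    | exact hab
    | exact hab.symm

lemma good_of_P3 {a b c : V} (hV : ∀ v : V, v = a ∨ v = b ∨ v = c)
    (hab : T.Adj a b) (hbc : T.Adj b c) (hac : ¬T.Adj a c) (hac' : a ≠ c) : Good T := by
  have ndA : ¬ Dominates T {a} := by
    intro h
    obtain ⟨u, hu, hadj⟩ := h c (by simpa using Ne.symm hac')
    simp only [Set.mem_singleton_iff] at hu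
    exact hac (hu ▸ hadj)
  have ndC : ¬ Dominates T {c} := by
    intro h
    obtain ⟨u, hu, hadj⟩ := h a (by simpa using hac')
    simp only [Set.mem_singleton_iff] at hu
    exact hac (hu ▸ hadj).symm
  have hdU : Dominates T ({a} ∪ {c}) := by
    intro w hw
    simp only [Set.mem_union, Set.mem_singleton_iff, not_or] at hw
    rcases hV w with rfl | rfl | rfl
    · exact absurd rfl hw.1
    · exact ⟨a, Or.inl rfl, hab⟩
    · exact absurd rfl hw.2
  intro v
  rcases hV v with rfl | rfl | rfl
  · refine Or.inr ⟨c, Ne.symm hac', ?_, ndA, ndC, hdU⟩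
    simp [Set.disjoint_singleton_right, hac']
  · left
    intro w hw
    simp only [Set.mem_singleton_iff] at hw
    rcases hV w with rfl | rfl | rfl
    · exact ⟨v, rfl, hab.symm⟩
    · exact absurd rfl hw
    · exact ⟨v, rfl, hbc⟩
  · refine Or.inr ⟨a, hac', ?_, ndC, ndA, by rwa [Set.union_comm]⟩
    simp [Set.disjoint_singleton_right, Ne.symm hac']

lemma good_of_P4 {a b c d : V} (hV : ∀ v : V, v = a ∨ v = b ∨ v = c ∨ v = d)
    (hab : T.Adj a b) (hbc : T.Adj b c) (hcd : T.Adj c d)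
    (hac : ¬T.Adj a c) (had : ¬T.Adj a d) (hbd : ¬T.Adj b d)
    (hac' : a ≠ c) (had' : a ≠ d) (hbd' : b ≠ d) : Good T := by
  have ndA : ¬ Dominates T {a} := by
    intro h
    obtain ⟨u, hu, hadj⟩ := h d (by simpa using Ne.symm had')
    simp only [Set.mem_singleton_iff] at hu
    exact had (hu ▸ hadj)
  have ndB : ¬ Dominates T {b} := by
    intro h
    obtain ⟨u, hu, hadj⟩ := h d (by simpa using Ne.symm hbd')
    simp only [Set.mem_singleton_iff] at hu
    exact hbd (hu ▸ hadj)
  have ndC : ¬ Dominates T {c} := by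
    intro h
    obtain ⟨u, hu, hadj⟩ := h a (by simpa using hac')
    simp only [Set.mem_singleton_iff] at hu
    exact hac (hu ▸ hadj).symm
  have ndD : ¬ Dominates T {d} := by
    intro h
    obtain ⟨u, hu, hadj⟩ := h a (by simpa using had')
    simp only [Set.mem_singleton_iff] at hu
    exact had (hu ▸ hadj).symm
  have hAC : Dominates T ({a} ∪ {c}) := by
    intro w hw
    simp only [Set.mem_union, Set.mem_singleton_iff, not_or] at hw
    rcases hV w with rfl | rfl | rfl | rfl
    · exact absurd rfl hw.1
    · exact ⟨a, Or.inl rfl, hab⟩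
    · exact absurd rfl hw.2
    · exact ⟨c, Or.inr rfl, hcd⟩
  have hBD : Dominates T ({b} ∪ {d}) := by
    intro w hw
    simp only [Set.mem_union, Set.mem_singleton_iff, not_or] at hw
    rcases hV w with rfl | rfl | rfl | rfl
    · exact ⟨b, Or.inl rfl, hab.symm⟩
    · exact absurd rfl hw.1
    · exact ⟨d, Or.inr rfl, hcd.symm⟩
    · exact absurd rfl hw.2
  intro v
  rcases hV v with rfl | rfl | rfl | rfl
  · exact Or.inr ⟨c, Ne.symm hac', by simp [Set.disjoint_singleton_right, hac'],
      ndA, ndC, hAC⟩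
  · exact Or.inr ⟨d, Ne.symm hbd', by simp [Set.disjoint_singleton_right, hbd'],
      ndB, ndD, hBD⟩
  · exact Or.inr ⟨a, hac', by simp [Set.disjoint_singleton_right, Ne.symm hac'],
      ndC, ndA, by rwa [Set.union_comm]⟩
  · exact Or.inr ⟨b, hbd', by simp [Set.disjoint_singleton_right, Ne.symm hbd'],
      ndD, ndB, by rwa [Set.union_comm]⟩

end GoodPath

section Iso
variable {V : Type*} [Fintype V] {T : SimpleGraph V}

lemma path2_struct {a b : V} (p : T.Walk a b) (hlen : p.length = 2) :
    ∃ x, T.Adj a x ∧ T.Adj x b ∧ p.support = [a, x, b] := by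
  cases p with
  | nil => simp at hlen
  | cons h1 q =>
    cases q with
    | nil => simp at hlen
    | cons h2 r =>
      cases r with
      | nil => exact ⟨_, h1, h2, by simp⟩
      | cons h3 s => simp [SimpleGraph.Walk.length_cons] at hlen

lemma iso_P1 (hcard : Fintype.card V = 1) : Nonempty (T ≃g pathGraph 1) := by
  have hsub : Subsingleton V := Fintype.card_le_one_iff_subsingleton.1 (by omega)
  let e : Fin 1 ≃ V := (Fintype.equivFinOfCardEq hcard).symm
  refine ⟨(⟨e, ?_⟩ : pathGraph 1 ≃g T).symm⟩
  intro i j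
  constructor
  · intro h; exact absurd (Subsingleton.elim (e i) (e j)) h.ne
  · intro h; exact absurd (Subsingleton.elim i j) h.ne

lemma iso_P2 (hcard : Fintype.card V = 2) {a b : V} (hab : T.Adj a b) :
    Nonempty (T ≃g pathGraph 2) := by
  have hab' : a ≠ b := hab.ne
  let f : Fin 2 → V := ![a, b]
  have hinj : Function.Injective f := by
    intro i j hij
    fin_cases i <;> fin_cases j <;> simp_all [f, hab']
  have hbij : Function.Bijective f :=
    (Fintype.bijective_iff_injective_and_card f).2 ⟨hinj, by simp [hcard]⟩
  let e : Fin 2 ≃ V := Equiv.ofBijective f hbij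
  refine ⟨(⟨e, ?_⟩ : pathGraph 2 ≃g T).symm⟩
  intro i j
  have he : ∀ k, e k = f k := fun k => rfl
  fin_cases i <;> fin_cases j <;>
    simp [he, f, pathGraph_adj, hab, hab.symm] <;> decide

lemma iso_P3 (hcard : Fintype.card V = 3) {a b c : V}
    (hab : T.Adj a b) (hbc : T.Adj b c) (hac : ¬T.Adj a c) (hac' : a ≠ c) :
    Nonempty (T ≃g pathGraph 3) := by
  have hab' : a ≠ b := hab.ne
  have hbc' : b ≠ c := hbc.ne
  have hca : ¬T.Adj c a := fun h => hac h.symm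
  let f : Fin 3 → V := ![a, b, c]
  have hinj : Function.Injective f := by
    intro i j hij
    fin_cases i <;> fin_cases j <;> simp_all [f, hab', hbc', hac']
  have hbij : Function.Bijective f :=
    (Fintype.bijective_iff_injective_and_card f).2 ⟨hinj, by simp [hcard]⟩
  let e : Fin 3 ≃ V := Equiv.ofBijective f hbij
  refine ⟨(⟨e, ?_⟩ : pathGraph 3 ≃g T).symm⟩
  intro i j
  have he : ∀ k, e k = f k := fun k => rfl
  fin_cases i <;> fin_cases j <;>
    simp [he, f, pathGraph_adj, hab, hbc, hac, hca, hab.symm, hbc.symm] <;> decide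

lemma iso_P4 (hcard : Fintype.card V = 4) {a b c d : V}
    (hab : T.Adj a b) (hbc : T.Adj b c) (hcd : T.Adj c d)
    (hac : ¬T.Adj a c) (had : ¬T.Adj a d) (hbd : ¬T.Adj b d)
    (hac' : a ≠ c) (had' : a ≠ d) (hbd' : b ≠ d) :
    Nonempty (T ≃g pathGraph 4) := by
  have hab' : a ≠ b := hab.ne
  have hbc' : b ≠ c := hbc.ne
  have hcd' : c ≠ d := hcd.ne
  let f : Fin 4 → V := ![a, b, c, d]
  have hinj : Function.Injective f := by
    intro i j hij
    fin_cases i <;> fin_cases j <;>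
      simp_all [f, hab', hbc', hcd', hac', had', hbd'] <;>
      first
        | rfl
        | exact absurd hij.symm (by assumption)
  have hbij : Function.Bijective f :=
    (Fintype.bijective_iff_injective_and_card f).2 ⟨hinj, by simp [hcard]⟩
  let e : Fin 4 ≃ V := Equiv.ofBijective f hbij
  have hca : ¬T.Adj c a := fun h => hac h.symm
  have hda : ¬T.Adj d a := fun h => had h.symm
  have hdb : ¬T.Adj d b := fun h => hbd h.symm
  refine ⟨(⟨e, ?_⟩ : pathGraph 4 ≃g T).symm⟩
  intro i j
  have he : ∀ k, e k = f k := fun k => rfl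
  fin_cases i <;> fin_cases j <;>
    simp [he, f, pathGraph_adj, hab, hbc, hcd, hac, had, hbd, hca, hda, hdb,
      hab.symm, hbc.symm, hcd.symm] <;> decide

end Iso

section Assemble
variable {V : Type*} [Fintype V] {T : SimpleGraph V}

lemma good_structure (hT : T.IsTree) (hG : Good T) :
    Fintype.card V ≤ 4 ∧ Nonempty (T ≃g pathGraph (Fintype.card V)) := by
  classical
  have hne : Nonempty V := hT.isConnected.nonempty
  obtain ⟨a, b, hmax⟩ := exists_diam T
  obtain ⟨p, hp, hplen⟩ := exists_geodesic_path hT a b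
  have hdlt : T.dist a b < Fintype.card V := hplen ▸ hp.length_lt
  have hcard1 : 1 ≤ Fintype.card V := Fintype.card_pos
  have hd1 : 2 ≤ Fintype.card V → T.dist a b ≥ 1 := by
    intro h2
    obtain ⟨u, v, huv⟩ := Fintype.exists_pair_of_one_lt_card (α := V) (by omega)
    have := hT.isConnected.pos_dist_of_ne huv
    have := hmax u v
    omega
  have htri : 3 ≤ Fintype.card V → 2 ≤ T.dist a b := by
    intro h3
    by_contra hle
    push_neg at hle
    obtain ⟨x, y, z, hxy, hxz, hyz⟩ := three_distinct h3
    exact no_triangle hT (adj_of_small_diam hT hmax (by omega) hxy)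
      (adj_of_small_diam hT hmax (by omega) hyz)
      (adj_of_small_diam hT hmax (by omega) hxz)
  have hab : a ≠ b → T.Adj a b → T.dist a b = 1 := fun _ h => adj_dist_eq_one hT h
  have hle4 : Fintype.card V ≤ 4 := by
    by_contra hgt
    push_neg at hgt
    have h2d : 2 ≤ T.dist a b := htri (by omega)
    rcases Nat.eq_or_lt_of_le h2d with hd2 | hd3
    · exact star_not_good hT hmax hd2.symm (by omega) hG
    rcases Nat.eq_or_lt_of_le hd3 with hd3' | hd4
    · -- dist a b = 3
      have hd3'' : T.dist a b = 3 := hd3'.symm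
      obtain ⟨x, y, hax, hxy, hyb, hsupp⟩ := path3_struct p (hplen.trans hd3'')
      have hnodup := hp.support_nodup
      rw [hsupp] at hnodup
      simp only [List.nodup_cons, List.mem_cons, List.not_mem_nil, or_false,
        List.mem_singleton, List.nodup_nil, and_true, not_or] at hnodup
      obtain ⟨⟨hax', hay', hab'⟩, ⟨hxy', hxb'⟩, hyb'⟩ := hnodup
      have hs1 := Finset.card_insert_le a ({x, y, b} : Finset V)
      have hs2 := Finset.card_insert_le x ({y, b} : Finset V)
      have hs3 := Finset.card_insert_le y ({b} : Finset V)
      have hcardle : ({a, x, y, b} : Finset V).card ≤ 4 := by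
        simp only [Finset.card_singleton] at *
        omega
      have hex : ∃ v : V, v ∉ ({a, x, y, b} : Finset V) := by
        by_contra hcon
        push_neg at hcon
        have hsubu : (Finset.univ : Finset V) ⊆ {a, x, y, b} := fun v _ => hcon v
        have := Finset.card_le_card hsubu
        rw [Finset.card_univ] at this
        omega
      obtain ⟨v, hv⟩ := hex
      simp only [Finset.mem_insert, Finset.mem_singleton, not_or] at hv
      obtain ⟨hva, hvx, hvy, hvb⟩ := hv
      have hnva : ¬T.Adj v a := by
        intro h
        have := chain4_dist hT h hax hxy hyb hvx hvy hvb hay' hab' hxb'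
        have := hmax v b
        omega
      have hnvb : ¬T.Adj v b := by
        intro h
        have := chain4_dist hT h hyb.symm hxy.symm hax.symm hvy hvx hva
          (Ne.symm hxb') (Ne.symm hab') (Ne.symm hay')
        have := hmax v a
        omega
      have hnab : ¬T.Adj a b := by
        intro h
        have := adj_dist_eq_one hT h
        omega
      have hnc : ∀ u, ¬(T.Adj u a ∧ T.Adj u b) := by
        rintro u ⟨h1, h2⟩
        have := chain2_dist hT h1.symm h2 hab'
        omega
      exact not_good_of_triple hnva hnvb hnab hnc hva hvb hab' hG
    · -- dist a b ≥ 4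
      obtain ⟨x, y, q, hax, hxy, hq, hqlen, hax', hay', hxy'⟩ :=
        path_two_step p hp (by omega)
      have hdy : T.dist y b = q.length := (tree_path_length hT hq).symm
      have hdya : T.dist a y = 2 := chain2_dist hT hax hxy hay'
      have hyb' : y ≠ b := by
        have h0 : 0 < T.dist y b := by omega
        exact dist_pos_ne h0
      have hab' : a ≠ b := by
        have h0 : 0 < T.dist a b := by omega
        exact dist_pos_ne h0
      have hnya : ¬T.Adj y a := by
        intro h
        have := adj_dist_eq_one hT h
        rw [SimpleGraph.dist_comm] at hdya
        omega
      have hnyb : ¬T.Adj y b := by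
        intro h
        have := adj_dist_eq_one hT h
        omega
      have hnab : ¬T.Adj a b := by
        intro h
        have := adj_dist_eq_one hT h
        omega
      have hnc : ∀ u, ¬(T.Adj u a ∧ T.Adj u b) := by
        rintro u ⟨h1, h2⟩
        have := chain2_dist hT h1.symm h2 hab'
        omega
      exact not_good_of_triple hnya hnyb hnab hnc (Ne.symm hay') hyb' hab' hG
  refine ⟨hle4, ?_⟩
  have hcases : Fintype.card V = 1 ∨ Fintype.card V = 2 ∨ Fintype.card V = 3 ∨
      Fintype.card V = 4 := by omega
  rcases hcases with hc | hc | hc | hc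
  · rw [hc]; exact iso_P1 hc
  · rw [hc]
    have hd : T.dist a b = 1 := by
      have := hd1 (by omega)
      omega
    exact iso_P2 hc (dist_one_adj hT hd)
  · rw [hc]
    have hd : T.dist a b = 2 := by
      have := htri (by omega)
      omega
    obtain ⟨m, ham, hmb, hsupp⟩ := path2_struct p (hplen.trans hd)
    have hnodup := hp.support_nodup
    rw [hsupp] at hnodup
    simp only [List.nodup_cons, List.mem_cons, List.not_mem_nil, or_false,
      List.mem_singleton, List.nodup_nil, and_true, not_or] at hnodup
    have hnab : ¬T.Adj a b := by
      intro h
      have := adj_dist_eq_one hT h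
      omega
    exact iso_P3 hc ham hmb hnab hnodup.1.2
  · rw [hc]
    have h2d : 2 ≤ T.dist a b := htri (by omega)
    have hd : T.dist a b = 3 := by
      rcases Nat.eq_or_lt_of_le h2d with h | h
      · exact absurd hG (star_not_good hT hmax h.symm (by omega))
      · omega
    obtain ⟨x, y, hax, hxy, hyb, hsupp⟩ := path3_struct p (hplen.trans hd)
    have hnodup := hp.support_nodup
    rw [hsupp] at hnodup
    simp only [List.nodup_cons, List.mem_cons, List.not_mem_nil, or_false,
      List.mem_singleton, List.nodup_nil, and_true, not_or] at hnodup
    obtain ⟨⟨hax', hay', hab'⟩, ⟨hxy', hxb'⟩, hyb'⟩ := hnodup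
    have hnay : ¬T.Adj a y := by
      intro h
      have := chain2_dist hT h hyb hab'
      omega
    have hnxb : ¬T.Adj x b := by
      intro h
      have h2 := chain2_dist hT hax h hab'
      omega
    have hnab : ¬T.Adj a b := by
      intro h
      have := adj_dist_eq_one hT h
      omega
    exact iso_P4 hc hax hxy hyb hnay hnab hnxb hay' hab' hxb'

lemma good_of_iso_aux {n : ℕ} (e : T ≃g pathGraph n) (h1 : 1 ≤ n) (h4 : n ≤ 4) :
    Good T := by
  interval_cases n
  · -- n = 1
    refine good_of_P1 (a := e.symm 0) fun v => ?_
    have : e v = 0 := Subsingleton.elim _ _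
    rw [← this, RelIso.symm_apply_apply]
  · -- n = 2
    have hV : ∀ v : V, v = e.symm 0 ∨ v = e.symm 1 := by
      intro v
      have h2 : ∀ i : Fin 2, i = 0 ∨ i = 1 := by decide
      rcases h2 (e v) with h | h
      · left; rw [← h, RelIso.symm_apply_apply]
      · right; rw [← h, RelIso.symm_apply_apply]
    refine good_of_P2 hV (e.symm.map_adj_iff.2 ?_)
    rw [pathGraph_adj]; decide
  · -- n = 3
    have hV : ∀ v : V, v = e.symm 0 ∨ v = e.symm 1 ∨ v = e.symm 2 := by
      intro v
      have h3 : ∀ i : Fin 3, i = 0 ∨ i = 1 ∨ i = 2 := by decide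
      rcases h3 (e v) with h | h | h
      · left; rw [← h, RelIso.symm_apply_apply]
      · right; left; rw [← h, RelIso.symm_apply_apply]
      · right; right; rw [← h, RelIso.symm_apply_apply]
    refine good_of_P3 hV (e.symm.map_adj_iff.2 ?_) (e.symm.map_adj_iff.2 ?_) ?_ ?_
    · rw [pathGraph_adj]; decide
    · rw [pathGraph_adj]; decide
    · intro h
      have := e.symm.map_adj_iff.1 h
      rw [pathGraph_adj] at this
      revert this; decide
    · intro h
      have := e.symm.injective h
      revert this; decide
  · -- n = 4
    have hV : ∀ v : V, v = e.symm 0 ∨ v = e.symm 1 ∨ v = e.symm 2 ∨ v = e.symm 3 := by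
      intro v
      have h4' : ∀ i : Fin 4, i = 0 ∨ i = 1 ∨ i = 2 ∨ i = 3 := by decide
      rcases h4' (e v) with h | h | h | h
      · left; rw [← h, RelIso.symm_apply_apply]
      · right; left; rw [← h, RelIso.symm_apply_apply]
      · right; right; left; rw [← h, RelIso.symm_apply_apply]
      · right; right; right; rw [← h, RelIso.symm_apply_apply]
    refine good_of_P4 hV (e.symm.map_adj_iff.2 ?_) (e.symm.map_adj_iff.2 ?_)
      (e.symm.map_adj_iff.2 ?_) ?_ ?_ ?_ ?_ ?_ ?_
    · rw [pathGraph_adj]; decide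
    · rw [pathGraph_adj]; decide
    · rw [pathGraph_adj]; decide
    · intro h
      have := e.symm.map_adj_iff.1 h
      rw [pathGraph_adj] at this
      revert this; decide
    · intro h
      have := e.symm.map_adj_iff.1 h
      rw [pathGraph_adj] at this
      revert this; decide
    · intro h
      have := e.symm.map_adj_iff.1 h
      rw [pathGraph_adj] at this
      revert this; decide
    · intro h
      have := e.symm.injective h
      revert this; decide
    · intro h
      have := e.symm.injective h
      revert this; decide
    · intro h
      have := e.symm.injective h
      revert this; decide

theorem stmt7' (hT : T.IsTree) :
    coalitionNumber T = Fintype.card V ↔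
      Fintype.card V ≤ 4 ∧
        Nonempty (T ≃g SimpleGraph.pathGraph (Fintype.card V)) := by
  have hne : Nonempty V := hT.isConnected.nonempty
  rw [cn_eq_iff_good]
  constructor
  · intro hG
    exact good_structure hT hG
  · rintro ⟨hle, ⟨e⟩⟩
    exact good_of_iso_aux e (by have := Fintype.card_pos (α := V); omega) hle

end Assemble

theorem stmt7 {V : Type*} [Fintype V] (T : SimpleGraph V) (hT : T.IsTree) :
    coalitionNumber T = Fintype.card V ↔
      Fintype.card V ≤ 4 ∧
        Nonempty (T ≃g SimpleGraph.pathGraph (Fintype.card V)) := by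
  exact stmt7' hT
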